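/- Let n be a natural number, let d be the orientation of the complete graph on Fin n defined by d S := S.max' (the maximum element of S), and let τ := Equiv.swap i j for i, j : Fin n with i ≠ j. Then m d (D τ d) is odd, where D τ d is the orientation defined by (D τ d) S := τ (d (S.image τ)). -/

import Mathlib

/-- An orientation of the complete graph on `X` assigns to each 2-element subset of `X`
one of its elements. -/
def GraphOrientation (X : Type*) [DecidableEq X] : Type _ :=
  (S : {S : Finset X // S.card = 2}) → {x : X // x ∈ S.val}

/-- The number `m u v` of relative inversions of two orientations: the number of 2-element
subsets on which they differ. -/
noncomputable def m {X : Type*} [Fintype X] [DecidableEq X] (u v : GraphOrientation X) : ℕ :=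
  Nat.card {S : {S : Finset X // S.card = 2} // u S ≠ v S}

/-- The canonical orientation `d` of the complete graph on `Fin n`, assigning to each
2-element subset its maximum. -/
def d (n : ℕ) : GraphOrientation (Fin n) :=
  fun S =>
    ⟨S.val.max' (Finset.card_pos.mp (by rw [S.prop]; norm_num)), S.val.max'_mem _⟩

/-- The action of a permutation `e` of `Fin n` on orientations of the complete graph,
`(D e u) S := e (u (S.image e⁻¹))`. -/
def D {n : ℕ} (e : Equiv.Perm (Fin n)) (u : GraphOrientation (Fin n)) :
    GraphOrientation (Fin n) :=
  fun S =>
    let T : {S : Finset (Fin n) // S.card = 2} :=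
      ⟨S.val.image ⇑e⁻¹, by
        rw [Finset.card_image_of_injective _ (Equiv.injective _)]
        exact S.prop⟩
    ⟨e (u T), by
      obtain ⟨a, ha, hay⟩ := Finset.mem_image.mp (u T).prop
      rw [← hay]
      simpa using ha⟩

open Finset Equiv Equiv.Perm

lemma max'_pair {n : ℕ} {a b : Fin n} (h : b < a) (H : ({a, b} : Finset (Fin n)).Nonempty) :
    ({a, b} : Finset (Fin n)).max' H = a := by
  apply le_antisymm
  · refine Finset.max'_le _ _ _ ?_
    rintro c hc
    simp only [mem_insert, mem_singleton] at hc
    rcases hc with rfl | rfl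
    · exact le_rfl
    · exact h.le
  · exact Finset.le_max' _ _ (by simp)

lemma pair_card {n : ℕ} {a b : Fin n} (h : a ≠ b) : ({a, b} : Finset (Fin n)).card = 2 := by
  rw [Finset.card_insert_of_notMem (by simpa using h), Finset.card_singleton]

/-- the key computation: on the pair `{a,b}` with `b < a`, the orientations `d` and `D τ d`
differ iff `(a,b)` is an inversion of `τ`. -/
lemma key {n : ℕ} (τ : Equiv.Perm (Fin n)) (hτ : τ⁻¹ = τ) {a b : Fin n} (hba : b < a)
    (S : {S : Finset (Fin n) // S.card = 2}) (hS : S.val = {a, b}) :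
    (d n S ≠ D τ (d n) S) ↔ τ a ≤ τ b := by
  have hab : a ≠ b := hba.ne'
  have hinv : ∀ x, τ (τ x) = x := fun x => by
    nth_rewrite 2 [← hτ]; exact τ.apply_symm_apply x
  have hd0 : (d n S : Fin n) = S.val.max'
      (Finset.card_pos.mp (by rw [S.prop]; norm_num)) := rfl
  have hd : (d n S : Fin n) = a := by
    rw [hd0]
    apply le_antisymm
    · refine Finset.max'_le _ _ _ ?_
      intro c hc
      rw [hS] at hc
      simp only [mem_insert, mem_singleton] at hc
      rcases hc with rfl | rfl
      · exact le_rfl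
      · exact hba.le
    · exact Finset.le_max' _ _ (by rw [hS]; simp)
  have hT : S.val.image ⇑τ⁻¹ = {τ a, τ b} := by
    rw [hS, hτ]; simp [Finset.image_insert]
  have hne : τ a ≠ τ b := fun h => hab (τ.injective h)
  have hDval : (D τ (d n) S : Fin n) = τ ((S.val.image ⇑τ⁻¹).max'
      (Finset.card_pos.mp (by rw [Finset.card_image_of_injective _ (Equiv.injective _), S.prop]; norm_num))) := rfl
  rcases lt_or_gt_of_ne hne with h1 | h1
  · -- τ a < τ b : inversion, max' is τ b, D value is τ (τ b) = b ≠ a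
    have hD : (D τ (d n) S : Fin n) = b := by
      rw [hDval]
      have h2 : ∀ H, (S.val.image ⇑τ⁻¹).max' H = τ b := by
        intro H
        apply le_antisymm
        · refine Finset.max'_le _ _ _ ?_
          intro c hc
          rw [hT] at hc
          simp only [mem_insert, mem_singleton] at hc
          rcases hc with rfl | rfl
          · exact h1.le
          · exact le_rfl
        · exact Finset.le_max' _ _ (by rw [hT]; simp)
      rw [h2, hinv]
    constructor
    · intro _; exact h1.le
    · intro _
      rw [Ne, Subtype.ext_iff, hd, hD]
      exact hab
  · -- τ b < τ a : no inversion, D value is a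
    have hD : (D τ (d n) S : Fin n) = a := by
      rw [hDval]
      have h2 : ∀ H, (S.val.image ⇑τ⁻¹).max' H = τ a := by
        intro H
        apply le_antisymm
        · refine Finset.max'_le _ _ _ ?_
          intro c hc
          rw [hT] at hc
          simp only [mem_insert, mem_singleton] at hc
          rcases hc with rfl | rfl
          · exact le_rfl
          · exact h1.le
        · exact Finset.le_max' _ _ (by rw [hT]; simp)
      rw [h2, hinv]
    constructor
    · intro h; exact absurd (Subtype.ext_iff.mpr (hd.trans hD.symm)) h
    · intro h; exact absurd h h1.not_ge


/-- For a transposition `τ = swap i j` on `Fin n`, the number of relative inversions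
between the canonical orientation `d` and `D τ d` is odd (note `τ⁻¹ = τ`, so
`(D τ d) S = τ (d (S.image τ))`). -/
theorem stmt_14 (n : ℕ) (i j : Fin n) (hij : i ≠ j) :
    Odd (m (d n) (D (Equiv.swap i j) (d n))) := by
  classical
  set τ := Equiv.swap i j with hτdef
  have hτ : τ⁻¹ = τ := Equiv.swap_inv i j
  set P : {S : Finset (Fin n) // S.card = 2} → Prop :=
    fun S => d n S ≠ D τ (d n) S with hP
  have hm : m (d n) (D τ (d n)) = (Finset.univ.filter P).card := by
    rw [m, Nat.card_eq_fintype_card, Fintype.card_subtype]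
  set s : Finset (Σ _ : Fin n, Fin n) :=
    (finPairsLT n).filter (fun x => τ x.1 ≤ τ x.2) with hs
  have hcard : s.card = (Finset.univ.filter P).card := by
    refine Finset.card_bij
      (fun x hx => (⟨{x.1, x.2}, pair_card
        (mem_finPairsLT.mp (Finset.mem_filter.mp hx).1).ne'⟩ :
          {S : Finset (Fin n) // S.card = 2})) ?_ ?_ ?_
    · intro x hx
      obtain ⟨h1, h2⟩ := Finset.mem_filter.mp hx
      refine Finset.mem_filter.mpr ⟨Finset.mem_univ _, ?_⟩
      exact (key τ hτ (mem_finPairsLT.mp h1) _ rfl).mpr h2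
    · intro x hx y hy hxy
      have hx' : x.2 < x.1 := mem_finPairsLT.mp (Finset.mem_filter.mp hx).1
      have hy' : y.2 < y.1 := mem_finPairsLT.mp (Finset.mem_filter.mp hy).1
      have hval : ({x.1, x.2} : Finset (Fin n)) = {y.1, y.2} :=
        Subtype.ext_iff.mp hxy
      have h1 : x.1 = y.1 := by
        have hx1 : x.1 ∈ ({y.1, y.2} : Finset (Fin n)) := by
          rw [← hval]; simp
        have hy1 : y.1 ∈ ({x.1, x.2} : Finset (Fin n)) := by
          rw [hval]; simp
        simp only [mem_insert, mem_singleton] at hx1 hy1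
        rcases hx1 with h | h
        · exact h
        · rcases hy1 with h' | h'
          · exact h'.symm
          · exfalso
            rw [h'] at hy'
            rw [h] at hx'
            exact absurd (hx'.trans hy') (lt_irrefl _)
      have h2 : x.2 = y.2 := by
        have hx2 : x.2 ∈ ({y.1, y.2} : Finset (Fin n)) := by
          rw [← hval]; simp
        simp only [mem_insert, mem_singleton] at hx2
        rcases hx2 with h | h
        · exfalso; rw [h, h1] at hx'; exact absurd hx' (lt_irrefl _)
        · exact h
      exact Sigma.ext h1 (heq_of_eq h2)
    · intro S hS
      have hPS : P S := (Finset.mem_filter.mp hS).2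
      have hne0 : S.val.Nonempty := Finset.card_pos.mp (by rw [S.prop]; norm_num)
      set a := S.val.max' hne0 with ha
      set b := S.val.min' hne0 with hb
      have hba : b < a := Finset.min'_lt_max'_of_card _ (by rw [S.prop]; norm_num)
      have hSv : S.val = {a, b} := by
        refine (Finset.eq_of_subset_of_card_le ?_ ?_).symm
        · intro c hc
          simp only [mem_insert, mem_singleton] at hc
          rcases hc with rfl | rfl
          · exact Finset.max'_mem _ _
          · exact Finset.min'_mem _ _
        · rw [S.prop, pair_card hba.ne']
      refine ⟨⟨a, b⟩, ?_, ?_⟩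
      · refine Finset.mem_filter.mpr ⟨mem_finPairsLT.mpr hba, ?_⟩
        exact (key τ hτ hba S hSv).mp hPS
      · exact Subtype.ext hSv.symm
  -- parity via signAux
  have hsign : signAux τ = (-1 : ℤˣ) ^ s.card := by
    rw [signAux, Finset.prod_ite, Finset.prod_const, Finset.prod_const, one_pow, mul_one]
  have hswap : signAux τ = -1 := signAux_swap hij
  have hodd : Odd s.card := by
    rcases Nat.even_or_odd s.card with he | ho
    · exfalso
      rw [hsign, he.neg_one_pow] at hswap
      exact absurd hswap (by decide)
    · exact ho
  rw [hm, ← hcard]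
  exact hodd
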